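/- Let R₁, R₂, R₃ be commutative rings, each with a ℤ-grading by additive subgroups 𝒜ⁱ : ℤ → AddSubgroup Rᵢ (1 ∈ 𝒜ⁱ 0, 𝒜ⁱ m · 𝒜ⁱ n ⊆ 𝒜ⁱ (m+n), internal direct sum), and let eᵢ ∈ 𝒜ⁱ 1 be a unit of Rᵢ for i = 1,2,3. Let φ : R₁ ⊗[ℤ] R₂ → R₃ be a surjective ring homomorphism such that φ maps (𝒜¹ m) ⊗ (𝒜² n) into 𝒜³ (m+n) for all m, n, such that φ(e₁ ⊗ 1) = φ(1 ⊗ e₂) = e₃, and such that the kernel of φ is the ideal of R₁ ⊗[ℤ] R₂ generated by the single element e₁ ⊗ 1 − 1 ⊗ e₂. Then the restriction of φ induces a ring isomorphism from (𝒜¹ 0) ⊗[ℤ] (𝒜² 0) onto the degree-zero subring 𝒜³ 0 of R₃. -/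

import Mathlib

open DirectSum

section aux
variable {R : Type*} [CommRing R] (𝒜 : ℤ → AddSubgroup R) [GradedRing 𝒜]

lemma auxGr_inv_mem (u : Rˣ) (hu : (u : R) ∈ 𝒜 1) : ((u⁻¹ : Rˣ) : R) ∈ 𝒜 (-1) := by
  classical
  set v : R := ((u⁻¹ : Rˣ) : R) with hv
  have h1 : (1 : R) = (u : R) * v := by rw [hv]; exact (Units.mul_inv u).symm
  have key : (1 : R) = (u : R) * (decompose 𝒜 v (-1) : R) := by
    have hsum : v = ∑ k ∈ (decompose 𝒜 v).support, (decompose 𝒜 v k : R) :=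
      (DirectSum.sum_support_decompose 𝒜 v).symm
    have h2 : (1 : R) = ∑ k ∈ (decompose 𝒜 v).support, (u : R) * (decompose 𝒜 v k : R) := by
      rw [h1]
      conv_lhs => rw [hsum]
      rw [Finset.mul_sum]
    have h3 := congrArg (GradedRing.proj 𝒜 0) h2
    rw [map_sum] at h3
    have hproj1 : GradedRing.proj 𝒜 0 (1 : R) = 1 := by
      rw [GradedRing.proj_apply, decompose_of_mem_same 𝒜 (SetLike.one_mem_graded 𝒜)]
    have hmem : ∀ k : ℤ, (u : R) * (decompose 𝒜 v k : R) ∈ 𝒜 (1 + k) := fun k =>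
      SetLike.mul_mem_graded hu (SetLike.coe_mem _)
    rw [hproj1] at h3
    rw [Finset.sum_eq_single (-1 : ℤ)] at h3
    · rw [h3, GradedRing.proj_apply,
        decompose_of_mem_same 𝒜 (by simpa using hmem (-1))]
    · intro k _ hk
      rw [GradedRing.proj_apply, decompose_of_mem_ne 𝒜 (hmem k)]
      omega
    · intro hns
      rw [DFinsupp.notMem_support_iff] at hns
      rw [hns]
      simp
  have : v = (decompose 𝒜 v (-1) : R) := by
    calc v = v * ((u : R) * (decompose 𝒜 v (-1) : R)) := by rw [← key, mul_one]
    _ = ((u : R) * v) * (decompose 𝒜 v (-1) : R) := by ring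
    _ = (decompose 𝒜 v (-1) : R) := by rw [← h1, one_mul]
  rw [this]
  exact SetLike.coe_mem _

lemma auxGr_zpow_mem (u : Rˣ) (hu : (u : R) ∈ 𝒜 1) (k : ℤ) : ((u ^ k : Rˣ) : R) ∈ 𝒜 k := by
  obtain ⟨n, rfl | rfl⟩ := k.eq_nat_or_neg
  · have h := SetLike.pow_mem_graded n hu
    rw [zpow_natCast, Units.val_pow_eq_pow_val]
    simpa using h
  · have h := SetLike.pow_mem_graded n (auxGr_inv_mem 𝒜 u hu)
    have : (u ^ (-(n : ℤ)) : Rˣ) = (u⁻¹) ^ n := by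
      rw [zpow_neg, zpow_natCast, inv_pow]
    rw [this, Units.val_pow_eq_pow_val]
    simpa using h

/-- The degree-wise retraction `R →+ 𝒜 0` sending a homogeneous `x` of degree `m`
to `x * u ^ (-m)`. -/
noncomputable def auxGr_retractHom (u : Rˣ) (hu : ∀ k : ℤ, ((u ^ k : Rˣ) : R) ∈ 𝒜 k) :
    R →+ 𝒜 0 :=
  (DirectSum.toAddMonoid fun (m : ℤ) =>
    ({ toFun := fun x => (⟨(x : R) * ((u ^ (-m) : Rˣ) : R), by
        simpa using SetLike.mul_mem_graded (SetLike.coe_mem x) (hu (-m))⟩ : 𝒜 0)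
       map_zero' := Subtype.ext (by simp)
       map_add' := fun x y => Subtype.ext (by simp [add_mul]) } : 𝒜 m →+ 𝒜 0)).comp
    (decomposeAddEquiv 𝒜).toAddMonoidHom

lemma auxGr_retractHom_apply (u : Rˣ) (hu : ∀ k : ℤ, ((u ^ k : Rˣ) : R) ∈ 𝒜 k)
    {m : ℤ} {x : R} (hx : x ∈ 𝒜 m) :
    ((auxGr_retractHom 𝒜 u hu x : 𝒜 0) : R) = x * ((u ^ (-m) : Rˣ) : R) := by
  unfold auxGr_retractHom
  simp only [AddMonoidHom.comp_apply, AddEquiv.coe_toAddMonoidHom, decomposeAddEquiv_apply]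
  rw [decompose_of_mem 𝒜 hx, DirectSum.toAddMonoid_of]
  rfl

/-- The retraction `R →+* 𝒜 0`. -/
noncomputable def auxGr_retract (u : Rˣ) (hu : ∀ k : ℤ, ((u ^ k : Rˣ) : R) ∈ 𝒜 k) :
    R →+* 𝒜 0 :=
  { auxGr_retractHom 𝒜 u hu with
    map_one' := Subtype.ext (by
      show ((auxGr_retractHom 𝒜 u hu 1 : 𝒜 0) : R) = ((1 : 𝒜 0) : R)
      rw [auxGr_retractHom_apply 𝒜 u hu (SetLike.one_mem_graded 𝒜)]
      simp)
    map_mul' := fun x y => by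
      show auxGr_retractHom 𝒜 u hu (x * y)
        = auxGr_retractHom 𝒜 u hu x * auxGr_retractHom 𝒜 u hu y
      induction x using DirectSum.Decomposition.inductionOn 𝒜 with
      | zero => simp
      | @homogeneous m xm =>
        induction y using DirectSum.Decomposition.inductionOn 𝒜 with
        | zero => simp
        | @homogeneous n yn =>
          apply Subtype.ext
          rw [SetLike.GradeZero.coe_mul]
          rw [auxGr_retractHom_apply 𝒜 u hu
            (SetLike.mul_mem_graded (SetLike.coe_mem xm) (SetLike.coe_mem yn))]
          rw [auxGr_retractHom_apply 𝒜 u hu (SetLike.coe_mem xm),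
            auxGr_retractHom_apply 𝒜 u hu (SetLike.coe_mem yn)]
          have : ((u ^ (-(m + n)) : Rˣ) : R)
              = ((u ^ (-m) : Rˣ) : R) * ((u ^ (-n) : Rˣ) : R) := by
            rw [← Units.val_mul, ← zpow_add]; ring_nf
          rw [this]; ring
        | add y₁ y₂ hy₁ hy₂ =>
          rw [mul_add, map_add, hy₁, hy₂, map_add, mul_add]
      | add x₁ x₂ hx₁ hx₂ =>
        rw [add_mul, map_add, hx₁, hx₂, map_add, add_mul] }

lemma auxGr_retract_apply (u : Rˣ) (hu : ∀ k : ℤ, ((u ^ k : Rˣ) : R) ∈ 𝒜 k)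
    {m : ℤ} {x : R} (hx : x ∈ 𝒜 m) :
    ((auxGr_retract 𝒜 u hu x : 𝒜 0) : R) = x * ((u ^ (-m) : Rˣ) : R) :=
  auxGr_retractHom_apply 𝒜 u hu hx

lemma auxGr_retract_fix (u : Rˣ) (hu : ∀ k : ℤ, ((u ^ k : Rˣ) : R) ∈ 𝒜 k)
    {x : R} (hx : x ∈ 𝒜 0) : auxGr_retract 𝒜 u hu x = ⟨x, hx⟩ :=
  Subtype.ext (by rw [auxGr_retract_apply 𝒜 u hu hx]; simp)

end aux

set_option maxHeartbeats 4000000 in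
set_option synthInstance.maxHeartbeats 400000 in
open scoped TensorProduct in
/-- **Lemma `gr`** (ring version): let `R₁, R₂, R₃` be ℤ-graded commutative rings with
degree-one units `e₁, e₂, e₃`, and let `φ : R₁ ⊗[ℤ] R₂ → R₃` be a surjective graded ring
homomorphism with `φ(e₁ ⊗ 1) = φ(1 ⊗ e₂) = e₃` whose kernel is generated by
`e₁ ⊗ 1 − 1 ⊗ e₂`.  Then the restriction of `φ` induces a ring isomorphism
`(𝒜¹ 0) ⊗[ℤ] (𝒜² 0) ≅ 𝒜³ 0`. -/
theorem gradeZero_tensor_equiv_of_ker_span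
    {R₁ R₂ R₃ : Type*} [CommRing R₁] [CommRing R₂] [CommRing R₃]
    (𝒜 : ℤ → AddSubgroup R₁) (ℬ : ℤ → AddSubgroup R₂) (𝒞 : ℤ → AddSubgroup R₃)
    [GradedRing 𝒜] [GradedRing ℬ] [GradedRing 𝒞]
    (e₁ : R₁) (e₂ : R₂) (e₃ : R₃)
    (he₁ : e₁ ∈ 𝒜 1) (he₂ : e₂ ∈ ℬ 1) (he₃ : e₃ ∈ 𝒞 1)
    (hu₁ : IsUnit e₁) (hu₂ : IsUnit e₂) (hu₃ : IsUnit e₃)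
    (φ : R₁ ⊗[ℤ] R₂ →+* R₃) (hsurj : Function.Surjective φ)
    (hgraded : ∀ (m n : ℤ), ∀ x ∈ 𝒜 m, ∀ y ∈ ℬ n, φ (x ⊗ₜ[ℤ] y) ∈ 𝒞 (m + n))
    (hφ₁ : φ (e₁ ⊗ₜ[ℤ] (1 : R₂)) = e₃) (hφ₂ : φ ((1 : R₁) ⊗ₜ[ℤ] e₂) = e₃)
    (hker : RingHom.ker φ = Ideal.span {e₁ ⊗ₜ[ℤ] (1 : R₂) - (1 : R₁) ⊗ₜ[ℤ] e₂}) :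
    ∃ ψ : (𝒜 0) ⊗[ℤ] (ℬ 0) ≃+* 𝒞 0,
      ∀ (x : 𝒜 0) (y : ℬ 0),
        (ψ (x ⊗ₜ[ℤ] y) : R₃) = φ ((x : R₁) ⊗ₜ[ℤ] (y : R₂)) := by
  classical
  obtain ⟨u₁, hu₁e⟩ := hu₁
  obtain ⟨u₂, hu₂e⟩ := hu₂
  obtain ⟨u₃, hu₃e⟩ := hu₃
  subst hu₁e; subst hu₂e; subst hu₃e
  have hU₁ : ∀ k : ℤ, ((u₁ ^ k : R₁ˣ) : R₁) ∈ 𝒜 k := auxGr_zpow_mem 𝒜 u₁ he₁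
  have hU₂ : ∀ k : ℤ, ((u₂ ^ k : R₂ˣ) : R₂) ∈ ℬ k := auxGr_zpow_mem ℬ u₂ he₂
  have hU₃ : ∀ k : ℤ, ((u₃ ^ k : R₃ˣ) : R₃) ∈ 𝒞 k := auxGr_zpow_mem 𝒞 u₃ he₃
  set r₁ : R₁ →+* 𝒜 0 := auxGr_retract 𝒜 u₁ hU₁ with hr₁
  set r₂ : R₂ →+* ℬ 0 := auxGr_retract ℬ u₂ hU₂ with hr₂
  set r₃ : R₃ →+* 𝒞 0 := auxGr_retract 𝒞 u₃ hU₃ with hr₃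
  -- inclusions
  let inc₁ : (𝒜 0) →+* R₁ :=
    { toFun := fun x => (x : R₁), map_one' := rfl, map_mul' := fun _ _ => rfl,
      map_zero' := rfl, map_add' := fun _ _ => rfl }
  let inc₂ : (ℬ 0) →+* R₂ :=
    { toFun := fun x => (x : R₂), map_one' := rfl, map_mul' := fun _ _ => rfl,
      map_zero' := rfl, map_add' := fun _ _ => rfl }
  -- the map f₁ : 𝒜 0 →+* 𝒞 0
  have hmem₁ : ∀ x : 𝒜 0, φ ((x : R₁) ⊗ₜ[ℤ] (1 : R₂)) ∈ 𝒞 0 := fun x => by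
    simpa using hgraded 0 0 (x : R₁) x.2 1 (SetLike.one_mem_graded ℬ)
  have hmem₂ : ∀ y : ℬ 0, φ ((1 : R₁) ⊗ₜ[ℤ] (y : R₂)) ∈ 𝒞 0 := fun y => by
    simpa using hgraded 0 0 (1 : R₁) (SetLike.one_mem_graded 𝒜) (y : R₂) y.2
  let f₁ : (𝒜 0) →+* 𝒞 0 :=
    { toFun := fun x => ⟨φ ((x : R₁) ⊗ₜ[ℤ] (1 : R₂)), hmem₁ x⟩
      map_one' := Subtype.ext (by
        show φ (((1 : 𝒜 0) : R₁) ⊗ₜ[ℤ] (1 : R₂)) = ((1 : 𝒞 0) : R₃)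
        rw [SetLike.GradeZero.coe_one, ← Algebra.TensorProduct.one_def, map_one]; rfl)
      map_mul' := fun x y => Subtype.ext (by
        show φ _ = φ _ * φ _
        rw [← map_mul, Algebra.TensorProduct.tmul_mul_tmul, mul_one,
          SetLike.GradeZero.coe_mul])
      map_zero' := Subtype.ext (by
        show φ _ = _
        rw [ZeroMemClass.coe_zero, TensorProduct.zero_tmul, map_zero]; rfl)
      map_add' := fun x y => Subtype.ext (by
        show φ _ = φ _ + φ _
        rw [← map_add, ← TensorProduct.add_tmul, AddMemClass.coe_add]) }
  let f₂ : (ℬ 0) →+* 𝒞 0 :=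
    { toFun := fun y => ⟨φ ((1 : R₁) ⊗ₜ[ℤ] (y : R₂)), hmem₂ y⟩
      map_one' := Subtype.ext (by
        show φ ((1 : R₁) ⊗ₜ[ℤ] ((1 : ℬ 0) : R₂)) = ((1 : 𝒞 0) : R₃)
        rw [SetLike.GradeZero.coe_one, ← Algebra.TensorProduct.one_def, map_one]; rfl)
      map_mul' := fun x y => Subtype.ext (by
        show φ _ = φ _ * φ _
        rw [← map_mul, Algebra.TensorProduct.tmul_mul_tmul, mul_one,
          SetLike.GradeZero.coe_mul])
      map_zero' := Subtype.ext (by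
        show φ _ = _
        rw [ZeroMemClass.coe_zero, TensorProduct.tmul_zero, map_zero]; rfl)
      map_add' := fun x y => Subtype.ext (by
        show φ _ = φ _ + φ _
        rw [← map_add, ← TensorProduct.tmul_add, AddMemClass.coe_add]) }
  let f : (𝒜 0) ⊗[ℤ] (ℬ 0) →+* 𝒞 0 :=
    (Algebra.TensorProduct.lift f₁.toIntAlgHom f₂.toIntAlgHom fun x y => Commute.all _ _).toRingHom
  have f_tmul : ∀ (x : 𝒜 0) (y : ℬ 0), f (x ⊗ₜ[ℤ] y) = f₁ x * f₂ y := fun x y =>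
    Algebra.TensorProduct.lift_tmul _ _ _ _ _
  let π : R₁ ⊗[ℤ] R₂ →+* (𝒜 0) ⊗[ℤ] (ℬ 0) :=
    (Algebra.TensorProduct.map r₁.toIntAlgHom r₂.toIntAlgHom).toRingHom
  let ι : (𝒜 0) ⊗[ℤ] (ℬ 0) →+* R₁ ⊗[ℤ] R₂ :=
    (Algebra.TensorProduct.map inc₁.toIntAlgHom inc₂.toIntAlgHom).toRingHom
  -- units map
  have hφu₁ : ∀ k : ℤ, φ (((u₁ ^ k : R₁ˣ) : R₁) ⊗ₜ[ℤ] (1 : R₂)) = ((u₃ ^ k : R₃ˣ) : R₃) := by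
    let h₁ : R₁ →+* R₃ := φ.comp Algebra.TensorProduct.includeLeftRingHom
    have hmap : Units.map h₁.toMonoidHom u₁ = u₃ := Units.ext (by
      show φ ((u₁ : R₁) ⊗ₜ[ℤ] (1 : R₂)) = (u₃ : R₃)
      exact hφ₁)
    intro k
    calc φ (((u₁ ^ k : R₁ˣ) : R₁) ⊗ₜ[ℤ] (1 : R₂)) = h₁ ((u₁ ^ k : R₁ˣ) : R₁) := rfl
      _ = ((Units.map h₁.toMonoidHom (u₁ ^ k) : R₃ˣ) : R₃) := rfl
      _ = (((Units.map h₁.toMonoidHom u₁) ^ k : R₃ˣ) : R₃) := by rw [map_zpow]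
      _ = ((u₃ ^ k : R₃ˣ) : R₃) := by rw [hmap]
  have hφu₂ : ∀ k : ℤ, φ ((1 : R₁) ⊗ₜ[ℤ] ((u₂ ^ k : R₂ˣ) : R₂)) = ((u₃ ^ k : R₃ˣ) : R₃) := by
    let h₂ : R₂ →+* R₃ := φ.comp (Algebra.TensorProduct.includeRight : R₂ →ₐ[ℤ] R₁ ⊗[ℤ] R₂).toRingHom
    have hmap : Units.map h₂.toMonoidHom u₂ = u₃ := Units.ext (by
      show φ ((1 : R₁) ⊗ₜ[ℤ] (u₂ : R₂)) = (u₃ : R₃)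
      exact hφ₂)
    intro k
    calc φ ((1 : R₁) ⊗ₜ[ℤ] ((u₂ ^ k : R₂ˣ) : R₂)) = h₂ ((u₂ ^ k : R₂ˣ) : R₂) := rfl
      _ = ((Units.map h₂.toMonoidHom (u₂ ^ k) : R₃ˣ) : R₃) := rfl
      _ = (((Units.map h₂.toMonoidHom u₂) ^ k : R₃ˣ) : R₃) := by rw [map_zpow]
      _ = ((u₃ ^ k : R₃ˣ) : R₃) := by rw [hmap]
  -- key identity on pure tensors
  have key2 : ∀ (a : R₁) (b : R₂), f (π (a ⊗ₜ[ℤ] b)) = r₃ (φ (a ⊗ₜ[ℤ] b)) := by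
    intro a b
    induction a using DirectSum.Decomposition.inductionOn 𝒜 with
    | zero => rw [TensorProduct.zero_tmul]; simp
    | @homogeneous m xm =>
      induction b using DirectSum.Decomposition.inductionOn ℬ with
      | zero => rw [TensorProduct.tmul_zero]; simp
      | @homogeneous n yn =>
        apply Subtype.ext
        have hπ : π ((xm : R₁) ⊗ₜ[ℤ] (yn : R₂)) = r₁ (xm : R₁) ⊗ₜ[ℤ] r₂ (yn : R₂) :=
          Algebra.TensorProduct.map_tmul _ _ _ _
        rw [hπ, f_tmul]
        show φ _ * φ _ = _
        rw [← map_mul, Algebra.TensorProduct.tmul_mul_tmul, mul_one, one_mul]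
        rw [hr₁, hr₂, hr₃]
        rw [auxGr_retract_apply 𝒜 u₁ hU₁ (SetLike.coe_mem xm),
          auxGr_retract_apply ℬ u₂ hU₂ (SetLike.coe_mem yn),
          auxGr_retract_apply 𝒞 u₃ hU₃ (hgraded m n _ (SetLike.coe_mem xm) _ (SetLike.coe_mem yn))]
        have hfac : ((xm : R₁) * ((u₁ ^ (-m) : R₁ˣ) : R₁)) ⊗ₜ[ℤ] ((yn : R₂) * ((u₂ ^ (-n) : R₂ˣ) : R₂))
            = (((xm : R₁) ⊗ₜ[ℤ] (yn : R₂)) * (((u₁ ^ (-m) : R₁ˣ) : R₁) ⊗ₜ[ℤ] (1 : R₂)))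
              * ((1 : R₁) ⊗ₜ[ℤ] ((u₂ ^ (-n) : R₂ˣ) : R₂)) := by
          simp [Algebra.TensorProduct.tmul_mul_tmul]
        rw [hfac, map_mul, map_mul, hφu₁, hφu₂]
        have : ((u₃ ^ (-(m + n)) : R₃ˣ) : R₃)
            = ((u₃ ^ (-m) : R₃ˣ) : R₃) * ((u₃ ^ (-n) : R₃ˣ) : R₃) := by
          rw [← Units.val_mul, ← zpow_add]; ring_nf
        rw [this, mul_assoc]
      | add b₁ b₂ hb₁ hb₂ =>
        rw [TensorProduct.tmul_add, map_add, map_add, map_add, map_add, hb₁, hb₂]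
    | add a₁ a₂ ha₁ ha₂ =>
      rw [TensorProduct.add_tmul, map_add, map_add, map_add, map_add, ha₁, ha₂]
  have key : ∀ w : R₁ ⊗[ℤ] R₂, f (π w) = r₃ (φ w) := by
    intro w
    induction w using TensorProduct.induction_on with
    | zero => simp
    | tmul a b => exact key2 a b
    | add w₁ w₂ h₁ h₂ => rw [map_add, map_add, map_add, map_add, h₁, h₂]
  -- π ∘ ι = id
  have πι : ∀ t : (𝒜 0) ⊗[ℤ] (ℬ 0), π (ι t) = t := by
    intro t
    induction t using TensorProduct.induction_on with
    | zero => simp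
    | tmul x y =>
      have hι : ι (x ⊗ₜ[ℤ] y) = (x : R₁) ⊗ₜ[ℤ] (y : R₂) := Algebra.TensorProduct.map_tmul _ _ _ _
      have hπ : π ((x : R₁) ⊗ₜ[ℤ] (y : R₂)) = r₁ (x : R₁) ⊗ₜ[ℤ] r₂ (y : R₂) :=
        Algebra.TensorProduct.map_tmul _ _ _ _
      rw [hι, hπ, hr₁, hr₂, auxGr_retract_fix 𝒜 u₁ hU₁ x.2, auxGr_retract_fix ℬ u₂ hU₂ y.2]
    | add t₁ t₂ h₁ h₂ => rw [map_add, map_add, h₁, h₂]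
  -- f in terms of φ ∘ ι
  have fι : ∀ t : (𝒜 0) ⊗[ℤ] (ℬ 0), ((f t : 𝒞 0) : R₃) = φ (ι t) := by
    intro t
    induction t using TensorProduct.induction_on with
    | zero => simp
    | tmul x y =>
      have hι : ι (x ⊗ₜ[ℤ] y) = (x : R₁) ⊗ₜ[ℤ] (y : R₂) := Algebra.TensorProduct.map_tmul _ _ _ _
      rw [f_tmul, hι]
      show φ _ * φ _ = _
      rw [← map_mul, Algebra.TensorProduct.tmul_mul_tmul, mul_one, one_mul]
    | add t₁ t₂ h₁ h₂ => rw [map_add, map_add, AddMemClass.coe_add, h₁, h₂, ← map_add]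
  -- injectivity
  have hinj : Function.Injective f := by
    rw [injective_iff_map_eq_zero]
    intro t ht
    have h0 : ι t ∈ RingHom.ker φ := by
      show φ (ι t) = 0
      rw [← fι t, ht, ZeroMemClass.coe_zero]
    rw [hker, Ideal.mem_span_singleton] at h0
    obtain ⟨c, hc⟩ := h0
    have hπd : π ((u₁ : R₁) ⊗ₜ[ℤ] (1 : R₂) - (1 : R₁) ⊗ₜ[ℤ] (u₂ : R₂)) = 0 := by
      rw [map_sub]
      have h1 : π ((u₁ : R₁) ⊗ₜ[ℤ] (1 : R₂)) = r₁ (u₁ : R₁) ⊗ₜ[ℤ] r₂ (1 : R₂) :=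
        Algebra.TensorProduct.map_tmul _ _ _ _
      have h2 : π ((1 : R₁) ⊗ₜ[ℤ] (u₂ : R₂)) = r₁ (1 : R₁) ⊗ₜ[ℤ] r₂ (u₂ : R₂) :=
        Algebra.TensorProduct.map_tmul _ _ _ _
      have hr₁e : r₁ (u₁ : R₁) = 1 := Subtype.ext (by
        rw [hr₁, auxGr_retract_apply 𝒜 u₁ hU₁ he₁]
        show (u₁ : R₁) * ((u₁ ^ (-1 : ℤ) : R₁ˣ) : R₁) = ((1 : 𝒜 0) : R₁)
        rw [zpow_neg_one, SetLike.GradeZero.coe_one, Units.mul_inv])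
      have hr₂e : r₂ (u₂ : R₂) = 1 := Subtype.ext (by
        rw [hr₂, auxGr_retract_apply ℬ u₂ hU₂ he₂]
        show (u₂ : R₂) * ((u₂ ^ (-1 : ℤ) : R₂ˣ) : R₂) = ((1 : ℬ 0) : R₂)
        rw [zpow_neg_one, SetLike.GradeZero.coe_one, Units.mul_inv])
      rw [h1, h2, hr₁e, hr₂e, map_one, map_one, sub_self]
    calc t = π (ι t) := (πι t).symm
      _ = π (((u₁ : R₁) ⊗ₜ[ℤ] (1 : R₂) - (1 : R₁) ⊗ₜ[ℤ] (u₂ : R₂)) * c) := by rw [← hc]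
      _ = 0 := by rw [map_mul, hπd]; exact zero_mul (π c)
  -- surjectivity
  have hsurj' : Function.Surjective f := by
    intro z
    obtain ⟨w, hw⟩ := hsurj (z : R₃)
    refine ⟨π w, ?_⟩
    rw [key w, hw]
    exact auxGr_retract_fix 𝒞 u₃ hU₃ z.2
  refine ⟨RingEquiv.ofBijective f ⟨hinj, hsurj'⟩, ?_⟩
  intro x y
  show ((f (x ⊗ₜ[ℤ] y) : 𝒞 0) : R₃) = _
  rw [fι]
  exact congrArg φ (Algebra.TensorProduct.map_tmul _ _ _ _)
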